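/- Let X' ∈ ℝ^{n'×p}, y' ∈ ℝ^{n'}, and define the validation error E_v(β) = ‖y' − X'β‖₂. Let λ > 0 and μ > 0, suppose P_λ is μ-strongly convex (β ↦ P_λ(β) − (μ/2)‖β‖₂² is convex), and let β̂ be a minimizer of P_λ with P_λ(β̂) finite. Then for every β ∈ ℝ^p and θ ∈ ℝ^n with f*(−λθ) and Ω*(X^⊤θ) finite, |E_v(β̂) − E_v(β)| ≤ ‖X'‖ · √(2 Gap_λ(β, θ)/μ), where ‖X'‖ is the operator norm of X'. In particular, if ‖X'‖ > 0, ε_v ≥ 0 and Gap_λ(β, θ) ≤ (μ/2)(ε_v/‖X'‖)², then |E_v(β̂) − E_v(β)| ≤ ε_v. -/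

import Mathlib

open scoped RealInnerProductSpace

noncomputable section

abbrev Vec (d : ℕ) := EuclideanSpace ℝ (Fin d)

/-- Matrix–vector product, landing in Euclidean space. -/
def mv {a b : ℕ} (M : Matrix (Fin a) (Fin b) ℝ) (v : Vec b) : Vec a := WithLp.toLp 2 (M.mulVec v)

/-- Fenchel conjugate of a real-valued function, with values in `EReal`. -/
noncomputable def rconj {d : ℕ} (f : Vec d → ℝ) (u : Vec d) : EReal :=
  ⨆ x, ((⟪u, x⟫ - f x : ℝ) : EReal)

/-- Fenchel conjugate of an `EReal`-valued function. -/
noncomputable def econj {d : ℕ} (g : Vec d → EReal) (u : Vec d) : EReal :=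
  ⨆ x, (((⟪u, x⟫ : ℝ) : EReal) - g x)

/-- Primal objective `P_λ(β) = f(Xβ) + λ Ω(β)`, with values in `EReal`. -/
noncomputable def Pfun {n p : ℕ} (X : Matrix (Fin n) (Fin p) ℝ)
    (f : Vec n → ℝ) (Ω : Vec p → EReal) (lam : ℝ) (b : Vec p) : EReal :=
  ((f (mv X b) : ℝ) : EReal) + ((lam : ℝ) : EReal) * Ω b

/-- Convexity of an `EReal`-valued function, via convex-combination inequalities. -/
def ECvx {d : ℕ} (g : Vec d → EReal) : Prop :=
  ∀ b1 b2 : Vec d, ∀ t : ℝ, 0 ≤ t → t ≤ 1 →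
    g (t • b1 + (1 - t) • b2) ≤
      ((t : ℝ) : EReal) * g b1 + (((1 - t) : ℝ) : EReal) * g b2

/-- Operator norm of a matrix between Euclidean spaces. -/
noncomputable def opNorm {a b : ℕ} (M : Matrix (Fin a) (Fin b) ℝ) : ℝ :=
  ‖LinearMap.toContinuousLinearMap (Matrix.toEuclideanLin M)‖

lemma combo_norm {E : Type*} [NormedAddCommGroup E] [InnerProductSpace ℝ E] (a b : E) (t : ℝ) :
    ‖t • a + (1-t) • b‖^2 = t*‖a‖^2 + (1-t)*‖b‖^2 - t*(1-t)*‖a-b‖^2 := by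
  have h1 : ∀ x : E, ‖x‖^2 = ⟪x, x⟫ := fun x => (real_inner_self_eq_norm_sq x).symm
  rw [h1, h1, h1, h1]
  simp only [inner_add_add_self, inner_sub_sub_self, real_inner_smul_left, real_inner_smul_right]
  ring

lemma sqrt_bound {d G μ : ℝ} (hμ : 0 < μ) (hd : 0 ≤ d) (h : μ/2*d^2 ≤ G) :
    d ≤ Real.sqrt (2*G/μ) := by
  have h2 : d^2 ≤ 2*G/μ := by rw [le_div_iff₀ hμ]; nlinarith
  calc d = Real.sqrt (d^2) := (Real.sqrt_sq hd).symm
    _ ≤ _ := Real.sqrt_le_sqrt h2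

lemma adj {n p : ℕ} (X : Matrix (Fin n) (Fin p) ℝ) (θ : Vec n) (b : Vec p) :
    ⟪mv X.transpose θ, b⟫ = ⟪θ, mv X b⟫ := by
  simp only [PiLp.inner_apply, RCLike.inner_apply, conj_trivial, mv]
  rw [show (∑ i, b i * X.transpose.mulVec θ i) = dotProduct b (X.transpose.mulVec θ) from rfl,
      show (∑ i, X.mulVec b i * θ i) = dotProduct (X.mulVec b) θ from rfl,
      Matrix.mulVec_transpose, dotProduct_comm (X.mulVec b), Matrix.dotProduct_mulVec, dotProduct_comm]

lemma mv_norm_le {a b : ℕ} (M : Matrix (Fin a) (Fin b) ℝ) (v : Vec b) :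
    ‖mv M v‖ ≤ opNorm M * ‖v‖ := by
  have := (LinearMap.toContinuousLinearMap (Matrix.toEuclideanLin M)).le_opNorm v
  simpa [mv, opNorm, Matrix.toEuclideanLin_apply] using this


lemma ereal_cases (x : EReal) : x = ⊥ ∨ (∃ r : ℝ, x = (r:ℝ)) ∨ x = ⊤ := by
  induction x using EReal.rec with
  | bot => exact Or.inl rfl
  | coe r => exact Or.inr (Or.inl ⟨r, rfl⟩)
  | top => exact Or.inr (Or.inr rfl)

/-- safe bound on the regression validation error.
`E_v(β) = ‖y' - X'β‖₂`, `P_λ` is `μ`-strongly convex with minimizer `β̂` (finite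
optimal value).  For dual feasible `θ` (the conjugates `fs`, `Ωs` finite), whenever
the duality gap `Gap_λ(β,θ)` equals a real `G`,
`|E_v(β̂) - E_v(β)| ≤ ‖X'‖ √(2G/μ)`; and if `‖X'‖ > 0`, `ε_v ≥ 0` and
`Gap_λ(β,θ) ≤ (μ/2)(ε_v/‖X'‖)²`, then `|E_v(β̂) - E_v(β)| ≤ ε_v`. -/
theorem stmt16 {n p n' : ℕ} (X : Matrix (Fin n) (Fin p) ℝ)
    (X' : Matrix (Fin n') (Fin p) ℝ) (y' : Vec n')
    (f : Vec n → ℝ) (hconv : ConvexOn ℝ Set.univ f)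
    (Ω : Vec p → EReal)
    (lam μ : ℝ) (hlam : 0 < lam) (hμ : 0 < μ)
    (hsc : ECvx fun b : Vec p =>
      Pfun X f Ω lam b - ((μ / 2 * ‖b‖ ^ 2 : ℝ) : EReal))
    (bhat : Vec p)
    (hmin : ∀ b, Pfun X f Ω lam bhat ≤ Pfun X f Ω lam b)
    (hfin : ∃ r : ℝ, Pfun X f Ω lam bhat = (r : EReal))
    (Ev : Vec p → ℝ) (hEv : ∀ b, Ev b = ‖y' - mv X' b‖) :
    ∀ (β : Vec p) (θ : Vec n) (fs Ωs : ℝ),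
      rconj f ((-lam) • θ) = (fs : EReal) →
      econj Ω (mv X.transpose θ) = (Ωs : EReal) →
      ((∀ G : ℝ,
        ((f (mv X β) : ℝ) : EReal) + ((fs : ℝ) : EReal)
            + ((lam : ℝ) : EReal) * (Ω β + ((Ωs : ℝ) : EReal)) = (G : EReal) →
        |Ev bhat - Ev β| ≤ opNorm X' * Real.sqrt (2 * G / μ)) ∧
      (∀ εv : ℝ, 0 ≤ εv → 0 < opNorm X' →
        ((f (mv X β) : ℝ) : EReal) + ((fs : ℝ) : EReal)
            + ((lam : ℝ) : EReal) * (Ω β + ((Ωs : ℝ) : EReal))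
          ≤ ((μ / 2 * (εv / opNorm X') ^ 2 : ℝ) : EReal) →
        |Ev bhat - Ev β| ≤ εv)) := by
  intro β θ fs Ωs hfs hΩs
  obtain ⟨r0, hr0⟩ := hfin
  have hlam' : (0:EReal) < ((lam:ℝ):EReal) := by exact_mod_cast hlam
  -- Ω bhat is finite
  have hΩb : ∃ w0 : ℝ, Ω bhat = ((w0:ℝ):EReal) := by
    rcases ereal_cases (Ω bhat) with h | h | h
    · rw [Pfun, h] at hr0
      rw [EReal.mul_comm, EReal.bot_mul_of_pos hlam'] at hr0
      simp at hr0
    · exact h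
    · rw [Pfun, h] at hr0
      rw [EReal.mul_comm, EReal.top_mul_of_pos hlam'] at hr0
      simp at hr0
  obtain ⟨w0, hw0⟩ := hΩb
  have hr0' : r0 = f (mv X bhat) + lam * w0 := by
    rw [Pfun, hw0, ← EReal.coe_mul, ← EReal.coe_add] at hr0
    exact_mod_cast hr0.symm
  -- weak duality : 0 ≤ f(X bhat) + lam*w0 + fs + lam*Ωs
  have hB : 0 ≤ f (mv X bhat) + lam * w0 + fs + lam * Ωs := by
    have h1 : ((⟪(-lam) • θ, mv X bhat⟫ - f (mv X bhat) : ℝ) : EReal) ≤ (fs : EReal) := by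
      rw [← hfs]; exact le_iSup (fun x => ((⟪(-lam) • θ, x⟫ - f x : ℝ) : EReal)) (mv X bhat)
    have h1' : ⟪(-lam) • θ, mv X bhat⟫ - f (mv X bhat) ≤ fs := by exact_mod_cast h1
    have h2 : (((⟪mv X.transpose θ, bhat⟫ : ℝ) : EReal) - Ω bhat) ≤ (Ωs : EReal) := by
      rw [← hΩs]; exact le_iSup (fun x => (((⟪mv X.transpose θ, x⟫ : ℝ) : EReal) - Ω x)) bhat
    rw [hw0, ← EReal.coe_sub] at h2
    have h2' : ⟪mv X.transpose θ, bhat⟫ - w0 ≤ Ωs := by exact_mod_cast h2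
    rw [adj] at h2'
    rw [real_inner_smul_left] at h1'
    nlinarith [mul_le_mul_of_nonneg_left h2' hlam.le]
  -- main bound
  have main : ∀ w1 : ℝ, Ω β = ((w1:ℝ):EReal) →
      |Ev bhat - Ev β| ≤ opNorm X' *
        Real.sqrt (2 * (f (mv X β) + fs + lam * (w1 + Ωs)) / μ) := by
    intro w1 hw1
    set d : ℝ := ‖β - bhat‖ with hd
    set r1 : ℝ := f (mv X β) + lam * w1 with hr1
    -- strong convexity step
    have hA : μ/2 * d^2 ≤ r1 - r0 := by
      have key : ∀ t ∈ Set.Ioo (0:ℝ) 1, μ/2 * (1-t) * d^2 ≤ r1 - r0 := by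
        intro t ht
        have h := hsc β bhat t ht.1.le ht.2.le
        have hPβ : Pfun X f Ω lam β = ((r1:ℝ):EReal) := by
          rw [Pfun, hw1, ← EReal.coe_mul, ← EReal.coe_add, hr1]
        simp only [hPβ, hr0] at h
        rw [← EReal.coe_sub, ← EReal.coe_sub, ← EReal.coe_mul, ← EReal.coe_mul,
            ← EReal.coe_add] at h
        set z := t • β + (1-t) • bhat with hz
        set R : ℝ := t * (r1 - μ/2*‖β‖^2) + (1-t) * (r0 - μ/2*‖bhat‖^2) with hR
        have h' : Pfun X f Ω lam z ≤ ((R + μ/2*‖z‖^2 : ℝ) : EReal) := by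
          rw [EReal.coe_add]
          exact (EReal.sub_le_iff_le_add (Or.inl (EReal.coe_ne_bot _))
            (Or.inl (EReal.coe_ne_top _))).1 h
        have h'' : (r0 : EReal) ≤ ((R + μ/2*‖z‖^2 : ℝ) : EReal) := le_trans (hr0 ▸ hmin z) h'
        have h3 : r0 ≤ R + μ/2*‖z‖^2 := by exact_mod_cast h''
        have hzn : ‖z‖^2 = t*‖β‖^2 + (1-t)*‖bhat‖^2 - t*(1-t)*d^2 := combo_norm β bhat t
        rw [hzn, hR] at h3
        have ht0 := ht.1
        nlinarith [sq_nonneg d]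
      have hcont : Filter.Tendsto (fun t : ℝ => μ/2 * (1-t) * d^2)
          (nhdsWithin 0 (Set.Ioo (0:ℝ) 1)) (nhds (μ/2 * (1-0) * d^2)) := by
        apply Filter.Tendsto.mono_left _ nhdsWithin_le_nhds
        exact (Continuous.tendsto (by continuity) 0)
      have hne : (nhdsWithin (0:ℝ) (Set.Ioo (0:ℝ) 1)).NeBot :=
        left_nhdsWithin_Ioo_neBot zero_lt_one
      have := le_of_tendsto hcont (Filter.eventually_iff_exists_mem.2
        ⟨Set.Ioo (0:ℝ) 1, self_mem_nhdsWithin, key⟩)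
      simpa using this
    -- combine
    have hG : μ/2 * d^2 ≤ f (mv X β) + fs + lam * (w1 + Ωs) := by
      rw [hr0'] at hA; nlinarith
    have hdle : d ≤ Real.sqrt (2 * (f (mv X β) + fs + lam * (w1 + Ωs)) / μ) :=
      sqrt_bound hμ (norm_nonneg _) hG
    have hEvb : |Ev bhat - Ev β| ≤ opNorm X' * d := by
      rw [hEv, hEv]
      have h1 : |‖y' - mv X' bhat‖ - ‖y' - mv X' β‖| ≤ ‖(y' - mv X' bhat) - (y' - mv X' β)‖ :=
        abs_norm_sub_norm_le _ _
      have h2 : (y' - mv X' bhat) - (y' - mv X' β) = mv X' (β - bhat) := by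
        rw [sub_sub_sub_cancel_left]
        simp [mv, Matrix.mulVec_sub]
      rw [h2] at h1
      exact le_trans h1 (mv_norm_le X' _)
    calc |Ev bhat - Ev β| ≤ opNorm X' * d := hEvb
      _ ≤ _ := mul_le_mul_of_nonneg_left hdle (norm_nonneg _)
  constructor
  · intro G hG
    -- Ω β finite
    have hΩβ : ∃ w1 : ℝ, Ω β = ((w1:ℝ):EReal) := by
      rcases ereal_cases (Ω β) with h | h | h
      · rw [h] at hG
        rw [show (⊥ : EReal) + ((Ωs:ℝ):EReal) = ⊥ by simp,
          EReal.mul_comm, EReal.bot_mul_of_pos hlam'] at hG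
        simp at hG
      · exact h
      · rw [h] at hG
        rw [show (⊤ : EReal) + ((Ωs:ℝ):EReal) = ⊤ by simp,
          EReal.mul_comm, EReal.top_mul_of_pos hlam'] at hG
        simp at hG
    obtain ⟨w1, hw1⟩ := hΩβ
    have hGr : G = f (mv X β) + fs + lam * (w1 + Ωs) := by
      rw [hw1] at hG
      exact_mod_cast hG.symm
    rw [hGr]
    exact main w1 hw1
  · intro εv hεv hop hle
    have hΩβ : ∃ w1 : ℝ, Ω β = ((w1:ℝ):EReal) := by
      rcases ereal_cases (Ω β) with h | h | h
      · exfalso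
        have hb : Pfun X f Ω lam β = ⊥ := by
          rw [Pfun, h, EReal.mul_comm, EReal.bot_mul_of_pos hlam']
          simp
        have h2 := hmin β
        rw [hr0, hb, le_bot_iff] at h2
        exact (EReal.coe_ne_bot r0) h2
      · exact h
      · exfalso
        rw [h] at hle
        rw [show (⊤ : EReal) + ((Ωs:ℝ):EReal) = ⊤ by simp,
          EReal.mul_comm, EReal.top_mul_of_pos hlam',
          EReal.add_top_of_ne_bot (by simp : ((f (mv X β):ℝ):EReal) + ((fs:ℝ):EReal) ≠ ⊥)] at hle
        exact EReal.coe_ne_top _ (top_le_iff.1 hle)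
    obtain ⟨w1, hw1⟩ := hΩβ
    have hler : f (mv X β) + fs + lam * (w1 + Ωs) ≤ μ/2 * (εv / opNorm X')^2 := by
      rw [hw1] at hle
      exact_mod_cast hle
    have h := main w1 hw1
    calc |Ev bhat - Ev β| ≤ opNorm X' *
        Real.sqrt (2 * (f (mv X β) + fs + lam * (w1 + Ωs)) / μ) := h
      _ ≤ opNorm X' * Real.sqrt (2 * (μ/2 * (εv / opNorm X')^2) / μ) := by
          apply mul_le_mul_of_nonneg_left _ (norm_nonneg _)
          apply Real.sqrt_le_sqrt
          gcongr
      _ = εv := by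
          rw [show 2 * (μ/2 * (εv / opNorm X')^2) / μ = (εv / opNorm X')^2 by
            field_simp]
          rw [Real.sqrt_sq (div_nonneg hεv hop.le)]
          field_simp

end
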